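/- For all real u, v with u ≠ v, the Airy kernel satisfies ∫₀^∞ Ai(u+z) · Ai(z+v) dz = ( Ai(u)·Ai'(v) − Ai'(u)·Ai(v) ) / (u − v), the integral on the left being absolutely convergent. -/

import Mathlib

open Filter Real MeasureTheory

/-- The Airy function, defined for real `u` by the improper integral
`Ai(u) = (1/π) ∫₀^∞ cos(t³/3 + u t) dt`, understood as the limit of
`∫₀^R cos(t³/3 + u t) dt` as `R → ∞`. -/
noncomputable def Ai (u : ℝ) : ℝ :=
  (1 / Real.pi) *
    limUnder Filter.atTop
      (fun R : ℝ => ∫ t in (0:ℝ)..R, Real.cos (t ^ 3 / 3 + u * t))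

open Set intervalIntegral Topology Metric

noncomputable section

def phi (x t : ℝ) : ℝ := t ^ 3 / 3 + x * t
def PP (x b : ℝ) : ℝ := Real.sin (phi x b) / (b ^ 2 + x)
def GG (x t : ℝ) : ℝ := 2 * t * Real.sin (phi x t) / (t ^ 2 + x) ^ 2
def GGx (x t : ℝ) : ℝ :=
  2 * t ^ 2 * Real.cos (phi x t) / (t ^ 2 + x) ^ 2 - 4 * t * Real.sin (phi x t) / (t ^ 2 + x) ^ 3
def P1 (x b : ℝ) : ℝ :=
  b * Real.cos (phi x b) / (b ^ 2 + x) - Real.sin (phi x b) / (b ^ 2 + x) ^ 2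
def P2 (x b : ℝ) : ℝ :=
  -(b ^ 2) * Real.sin (phi x b) / (b ^ 2 + x) - 2 * b * Real.cos (phi x b) / (b ^ 2 + x) ^ 2
    + 2 * Real.sin (phi x b) / (b ^ 2 + x) ^ 3
def EE (x b : ℝ) : ℝ :=
  2 * b * Real.cos (phi x b) / (b ^ 2 + x) ^ 2 - 2 * Real.sin (phi x b) / (b ^ 2 + x) ^ 3
def HH (a : ℝ) (n : ℕ) (x : ℝ) : ℝ :=
  (∫ t in (0:ℝ)..(a + n), Real.cos (phi x t)) - PP x (a + n)
def HH' (a : ℝ) (n : ℕ) (x : ℝ) : ℝ :=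
  -(∫ t in (0:ℝ)..(a + n), t * Real.sin (phi x t)) - P1 x (a + n)
def HH2 (a : ℝ) (n : ℕ) (x : ℝ) : ℝ := x * HH a n x + EE x (a + n)

lemma hasDerivAt_phi_t (x t : ℝ) : HasDerivAt (fun s => phi x s) (t ^ 2 + x) t := by
  have h1 : HasDerivAt (fun s : ℝ => s ^ 3 / 3) (t ^ 2) t := by
    simpa using ((hasDerivAt_pow 3 t).div_const 3)
  have h2 : HasDerivAt (fun s : ℝ => x * s) x t := by
    simpa using (hasDerivAt_id t).const_mul x
  exact h1.add h2

lemma continuous_cos_phi (x : ℝ) : Continuous (fun t => Real.cos (phi x t)) := by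
  apply Real.continuous_cos.comp
  unfold phi; fun_prop

lemma hasDerivAt_P_t (x t : ℝ) (ht : t ^ 2 + x ≠ 0) :
    HasDerivAt (fun s => Real.sin (phi x s) / (s ^ 2 + x))
      (Real.cos (phi x t) - GG x t) t := by
  have hs : HasDerivAt (fun s => Real.sin (phi x s)) ((t ^ 2 + x) * Real.cos (phi x t)) t := by
    exact ((Real.hasDerivAt_sin (phi x t)).comp t (hasDerivAt_phi_t x t)).congr_deriv (by ring)
  have hd : HasDerivAt (fun s : ℝ => s ^ 2 + x) (2 * t) t := by
    simpa using ((hasDerivAt_pow 2 t).add_const x)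
  have := hs.div hd ht
  refine this.congr_deriv ?_
  rw [GG]; field_simp

lemma sq_add_pos {a x t : ℝ} (h0a : 0 ≤ a) (hax : 1 ≤ a ^ 2 + x) (hat : a ≤ t) :
    1 ≤ t ^ 2 + x := by nlinarith

lemma continuousOn_G (x a : ℝ) (h0a : 0 ≤ a) (hax : 1 ≤ a ^ 2 + x) :
    ContinuousOn (GG x) (Ici a) := by
  apply ContinuousOn.div
  · exact Continuous.continuousOn (by unfold phi; fun_prop)
  · exact Continuous.continuousOn (by fun_prop)
  · intro t ht
    have := sq_add_pos h0a hax ht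
    positivity

lemma ibp1 {x a b : ℝ} (h0a : 0 ≤ a) (hax : 1 ≤ a ^ 2 + x) (hab : a ≤ b) :
    ∫ t in a..b, Real.cos (phi x t) =
      PP x b - PP x a + ∫ t in a..b, GG x t := by
  have hsub : uIcc a b ⊆ Ici a := by
    rw [uIcc_of_le hab]; exact Icc_subset_Ici_self
  have hGint : IntervalIntegrable (GG x) volume a b :=
    ((continuousOn_G x a h0a hax).mono hsub).intervalIntegrable
  have hCint : IntervalIntegrable (fun t => Real.cos (phi x t)) volume a b :=
    (continuous_cos_phi x).intervalIntegrable _ _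
  have hftc : ∫ t in a..b, (Real.cos (phi x t) - GG x t) = PP x b - PP x a := by
    apply intervalIntegral.integral_eq_sub_of_hasDerivAt
    · intro t ht
      have hat : a ≤ t := (hsub ht).out
      exact hasDerivAt_P_t x t (by have := sq_add_pos h0a hax hat; positivity)
    · exact hCint.sub hGint
  have := intervalIntegral.integral_sub hCint hGint
  rw [this] at hftc
  linarith

-- majorant bound
lemma G_bound {x a t : ℝ} (h0a : 0 ≤ a) (hax : 1 ≤ a ^ 2 + x) (hat : a ≤ t) :
    |GG x t| ≤ (2 + |x|) * (1 + (t - a) ^ 2)⁻¹ := by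
  have hD : 1 ≤ t ^ 2 + x := sq_add_pos h0a hax hat
  have hD2 : 1 + (t - a) ^ 2 ≤ t ^ 2 + x := by nlinarith
  have ht0 : 0 ≤ t := le_trans h0a hat
  have hsin : |Real.sin (phi x t)| ≤ 1 := Real.abs_sin_le_one _
  have habs : |GG x t| ≤ 2 * t / (t ^ 2 + x) ^ 2 := by
    rw [GG, abs_div, abs_of_pos (by positivity : (0:ℝ) < (t ^ 2 + x) ^ 2)]
    apply div_le_div_of_nonneg_right ?_ (by positivity)
    calc |2 * t * Real.sin (phi x t)| = 2 * t * |Real.sin (phi x t)| := by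
          rw [abs_mul, abs_of_nonneg (by positivity)]
      _ ≤ 2 * t * 1 := by nlinarith
      _ = 2 * t := by ring
  refine habs.trans ?_
  rw [inv_eq_one_div, mul_one_div]
  rw [div_le_div_iff₀ (by positivity) (by positivity)]
  have h2t : 2 * t ≤ (t ^ 2 + x) * (2 + |x|) := by
    nlinarith [sq_nonneg (t - 1), mul_nonneg (sub_nonneg.2 hD) (abs_nonneg x), neg_abs_le x, abs_nonneg x]
  have k1 : 2 * t * (1 + (t - a) ^ 2) ≤ ((t ^ 2 + x) * (2 + |x|)) * (1 + (t - a) ^ 2) :=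
    mul_le_mul_of_nonneg_right h2t (by positivity)
  have k2 : ((t ^ 2 + x) * (2 + |x|)) * (1 + (t - a) ^ 2) ≤ ((t ^ 2 + x) * (2 + |x|)) * (t ^ 2 + x) :=
    mul_le_mul_of_nonneg_left hD2 (by positivity)
  nlinarith [k1, k2]

lemma majorant_integrable (a c : ℝ) :
    IntegrableOn (fun t => c * (1 + (t - a) ^ 2)⁻¹) (Ioi a) := by
  have h := (integrable_inv_one_add_sq).comp_sub_right a
  exact ((h.const_mul c).integrableOn)

lemma G_integrableOn {x a : ℝ} (h0a : 0 ≤ a) (hax : 1 ≤ a ^ 2 + x) :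
    IntegrableOn (GG x) (Ioi a) := by
  apply Integrable.mono' (majorant_integrable a (2 + |x|))
  · exact ((continuousOn_G x a h0a hax).mono Ioi_subset_Ici_self).aestronglyMeasurable
      measurableSet_Ioi
  · filter_upwards [ae_restrict_mem measurableSet_Ioi] with t ht
    exact G_bound h0a hax (le_of_lt ht)


lemma PP_tendsto_zero {x a : ℝ} (h0a : 0 ≤ a) (hax : 1 ≤ a ^ 2 + x) :
    Tendsto (fun R : ℝ => PP x R) atTop (𝓝 0) := by
  have hD : Tendsto (fun R : ℝ => R ^ 2 + x) atTop atTop :=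
    tendsto_atTop_add_const_right _ x (tendsto_pow_atTop (two_ne_zero))
  have hinv : Tendsto (fun R : ℝ => (R ^ 2 + x)⁻¹) atTop (𝓝 0) := hD.inv_tendsto_atTop
  apply squeeze_zero_norm' ?_ hinv
  filter_upwards [eventually_ge_atTop a] with R hR
  have h1 : (0:ℝ) < R ^ 2 + x := lt_of_lt_of_le one_pos (sq_add_pos h0a hax hR)
  rw [Real.norm_eq_abs, PP, abs_div, abs_of_pos h1, inv_eq_one_div]
  exact (div_le_div_iff_of_pos_right h1).mpr (Real.abs_sin_le_one _)

lemma rep_tendsto {x a : ℝ} (h0a : 0 ≤ a) (hax : 1 ≤ a ^ 2 + x) :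
    Tendsto (fun R : ℝ => ∫ t in (0:ℝ)..R, Real.cos (phi x t)) atTop
      (𝓝 ((∫ t in (0:ℝ)..a, Real.cos (phi x t)) - PP x a + ∫ t in Ioi a, GG x t)) := by
  have hint := G_integrableOn h0a hax
  have h1 : Tendsto (fun R : ℝ => ∫ t in a..R, GG x t) atTop (𝓝 (∫ t in Ioi a, GG x t)) :=
    intervalIntegral_tendsto_integral_Ioi a hint tendsto_id
  have h2 := PP_tendsto_zero h0a hax
  have h3 : Tendsto (fun R : ℝ => (∫ t in (0:ℝ)..a, Real.cos (phi x t)) +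
      ((PP x R - PP x a) + ∫ t in a..R, GG x t)) atTop
      (𝓝 ((∫ t in (0:ℝ)..a, Real.cos (phi x t)) + ((0 - PP x a) + ∫ t in Ioi a, GG x t))) :=
    tendsto_const_nhds.add (((h2.sub_const _)).add h1)
  have heq : ∀ᶠ R in atTop, (∫ t in (0:ℝ)..a, Real.cos (phi x t)) +
      ((PP x R - PP x a) + ∫ t in a..R, GG x t) = ∫ t in (0:ℝ)..R, Real.cos (phi x t) := by
    filter_upwards [eventually_ge_atTop a] with R hR
    rw [← ibp1 h0a hax hR]
    apply intervalIntegral.integral_add_adjacent_intervals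
    · exact (continuous_cos_phi x).intervalIntegrable _ _
    · exact (continuous_cos_phi x).intervalIntegrable _ _
  have := h3.congr' heq
  convert this using 2
  ring

lemma pi_mul_Ai {x a : ℝ} (h0a : 0 ≤ a) (hax : 1 ≤ a ^ 2 + x) :
    Real.pi * Ai x =
      (∫ t in (0:ℝ)..a, Real.cos (phi x t)) - PP x a + ∫ t in Ioi a, GG x t := by
  have h : limUnder Filter.atTop
      (fun R : ℝ => ∫ t in (0:ℝ)..R, Real.cos (t ^ 3 / 3 + x * t)) =
      (∫ t in (0:ℝ)..a, Real.cos (phi x t)) - PP x a + ∫ t in Ioi a, GG x t :=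
    (rep_tendsto h0a hax).limUnder_eq
  rw [Ai, h.symm]
  field_simp

lemma ai_decay {x : ℝ} (hx : 1 ≤ x) : |Ai x| ≤ 1 / x := by
  have h0 := pi_mul_Ai (a := 0) le_rfl (by linarith)
  have hpa : PP x 0 = 0 := by simp [PP, phi]
  rw [intervalIntegral.integral_same, hpa] at h0
  have hD : ∀ t : ℝ, 0 ≤ t → (0:ℝ) < t ^ 2 + x := fun t ht => by nlinarith
  have hderiv : ∀ t ∈ Ici (0:ℝ), HasDerivAt (fun s => -((s ^ 2 + x)⁻¹))
      (2 * t / (t ^ 2 + x) ^ 2) t := by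
    intro t ht
    have hd : HasDerivAt (fun s : ℝ => s ^ 2 + x) (2 * t) t := by
      simpa using ((hasDerivAt_pow 2 t).add_const x)
    have := (hd.inv (ne_of_gt (hD t ht))).neg
    refine this.congr_deriv ?_
    field_simp
  have htend : Tendsto (fun s : ℝ => -((s ^ 2 + x)⁻¹)) atTop (𝓝 0) := by
    have hDD : Tendsto (fun R : ℝ => R ^ 2 + x) atTop atTop :=
      tendsto_atTop_add_const_right _ x (tendsto_pow_atTop (two_ne_zero))
    simpa using hDD.inv_tendsto_atTop.neg
  have hint : IntegrableOn (fun t => 2 * t / (t ^ 2 + x) ^ 2) (Ioi (0:ℝ)) := by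
    apply integrableOn_Ioi_deriv_of_nonneg' hderiv ?_ htend
    intro t ht
    have ht' : (0:ℝ) < t := ht
    have := hD t (le_of_lt ht')
    positivity
  have hval : ∫ t in Ioi (0:ℝ), 2 * t / (t ^ 2 + x) ^ 2 = 1 / x := by
    rw [integral_Ioi_of_hasDerivAt_of_tendsto' hderiv hint htend]
    norm_num
  have hbnd : |∫ t in Ioi (0:ℝ), GG x t| ≤ 1 / x := by
    rw [← hval, ← Real.norm_eq_abs]
    apply MeasureTheory.norm_integral_le_of_norm_le hint
    filter_upwards [ae_restrict_mem measurableSet_Ioi] with t ht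
    have ht0 : (0:ℝ) ≤ t := le_of_lt ht
    have hDt := hD t ht0
    rw [Real.norm_eq_abs, GG, abs_div, abs_of_pos (by positivity : (0:ℝ) < (t ^ 2 + x) ^ 2)]
    apply div_le_div_of_nonneg_right ?_ (by positivity)
    calc |2 * t * Real.sin (phi x t)| = 2 * t * |Real.sin (phi x t)| := by
          rw [abs_mul, abs_of_nonneg (by positivity)]
      _ ≤ 2 * t * 1 := by nlinarith [Real.abs_sin_le_one (phi x t)]
      _ = 2 * t := by ring
  simp only [zero_sub, neg_zero, zero_add] at h0
  rw [← h0, abs_mul, abs_of_pos Real.pi_pos] at hbnd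
  nlinarith [Real.pi_gt_three, abs_nonneg (Ai x), hbnd]

-- derivative of phi in x
lemma hasDerivAt_phi_x (t x : ℝ) : HasDerivAt (fun y => phi y t) t x := by
  exact ((hasDerivAt_mul_const t).const_add (t ^ 3 / 3) :
    HasDerivAt (fun y : ℝ => t ^ 3 / 3 + y * t) t x)

lemma hasDerivAt_sin_phi_x (t x : ℝ) :
    HasDerivAt (fun y => Real.sin (phi y t)) (t * Real.cos (phi x t)) x := by
  exact ((Real.hasDerivAt_sin (phi x t)).comp x (hasDerivAt_phi_x t x)).congr_deriv (mul_comm _ _)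

lemma hasDerivAt_cos_phi_x (t x : ℝ) :
    HasDerivAt (fun y => Real.cos (phi y t)) (-(t * Real.sin (phi x t))) x := by
  have := (Real.hasDerivAt_cos (phi x t)).comp x (hasDerivAt_phi_x t x)
  refine this.congr_deriv ?_; ring

-- parametric derivative: ∫ cos
lemma hasDerivAt_F (b x : ℝ) :
    HasDerivAt (fun y => ∫ t in (0:ℝ)..b, Real.cos (phi y t))
      (-∫ t in (0:ℝ)..b, t * Real.sin (phi x t)) x := by
  have h := (intervalIntegral.hasDerivAt_integral_of_dominated_loc_of_deriv_le
    (F := fun y t => Real.cos (phi y t)) (F' := fun y t => -(t * Real.sin (phi y t)))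
    (a := 0) (b := b) (μ := volume) (x₀ := x) (bound := fun t => |t|) (s := ball x 1) (ball_mem_nhds x one_pos)
    (Eventually.of_forall fun y =>
      (Continuous.aestronglyMeasurable (by unfold phi; fun_prop)))
    ((by unfold phi; fun_prop : Continuous fun t => Real.cos (phi x t)).intervalIntegrable _ _)
    (Continuous.aestronglyMeasurable (by unfold phi; fun_prop))
    (Eventually.of_forall fun t => fun _ y _ => by
      rw [norm_neg, Real.norm_eq_abs, abs_mul]
      nlinarith [Real.abs_sin_le_one (phi y t), abs_nonneg t, abs_nonneg (Real.sin (phi y t))])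
    ((continuous_abs).intervalIntegrable _ _)
    (Eventually.of_forall fun t => fun _ y _ => hasDerivAt_cos_phi_x t y)).2
  simpa [intervalIntegral.integral_neg] using h

-- parametric derivative: ∫ t sin
lemma hasDerivAt_F2 (b x : ℝ) :
    HasDerivAt (fun y => ∫ t in (0:ℝ)..b, t * Real.sin (phi y t))
      (∫ t in (0:ℝ)..b, t ^ 2 * Real.cos (phi x t)) x := by
  have h := (intervalIntegral.hasDerivAt_integral_of_dominated_loc_of_deriv_le
    (F := fun y t => t * Real.sin (phi y t)) (F' := fun y t => t ^ 2 * Real.cos (phi y t))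
    (a := 0) (b := b) (μ := volume) (x₀ := x) (bound := fun t => t ^ 2) (s := ball x 1) (ball_mem_nhds x one_pos)
    (Eventually.of_forall fun y =>
      (Continuous.aestronglyMeasurable (by unfold phi; fun_prop)))
    ((by unfold phi; fun_prop : Continuous fun t => t * Real.sin (phi x t)).intervalIntegrable _ _)
    (Continuous.aestronglyMeasurable (by unfold phi; fun_prop))
    (Eventually.of_forall fun t => fun _ y _ => by
      rw [Real.norm_eq_abs, abs_mul, abs_pow]
      calc |t| ^ 2 * |Real.cos (phi y t)| ≤ |t| ^ 2 * 1 :=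
            mul_le_mul_of_nonneg_left (Real.abs_cos_le_one _) (by positivity)
        _ = t ^ 2 := by rw [mul_one, sq_abs])
    ((by fun_prop : Continuous fun t : ℝ => t ^ 2).intervalIntegrable _ _)
    (Eventually.of_forall fun t => fun _ y _ => by
      have := (hasDerivAt_sin_phi_x t y).const_mul t
      refine this.congr_deriv ?_; ring)).2
  exact h

-- FTC in t : ∫₀^b t² cos = sin(phi x b) - x ∫₀^b cos
lemma ftc_t2cos (x b : ℝ) :
    ∫ t in (0:ℝ)..b, t ^ 2 * Real.cos (phi x t)
      = Real.sin (phi x b) - x * ∫ t in (0:ℝ)..b, Real.cos (phi x t) := by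
  have hderiv : ∀ t ∈ uIcc (0:ℝ) b,
      HasDerivAt (fun s => Real.sin (phi x s))
        (t ^ 2 * Real.cos (phi x t) + x * Real.cos (phi x t)) t := by
    intro t _
    have h1 : HasDerivAt (fun s : ℝ => s ^ 3 / 3) (t ^ 2) t := by
      simpa using ((hasDerivAt_pow 3 t).div_const 3)
    have h2 : HasDerivAt (fun s : ℝ => x * s) x t := by
      simpa using (hasDerivAt_id t).const_mul x
    have hp : HasDerivAt (fun s => phi x s) (t ^ 2 + x) t := by exact h1.add h2
    have := (Real.hasDerivAt_sin (phi x t)).comp t hp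
    refine this.congr_deriv ?_; ring
  have hint : IntervalIntegrable
      (fun t => t ^ 2 * Real.cos (phi x t) + x * Real.cos (phi x t)) volume 0 b :=
    (by unfold phi; fun_prop : Continuous fun t =>
      t ^ 2 * Real.cos (phi x t) + x * Real.cos (phi x t)).intervalIntegrable _ _
  have h := intervalIntegral.integral_eq_sub_of_hasDerivAt hderiv hint
  rw [intervalIntegral.integral_add
      ((by unfold phi; fun_prop : Continuous fun t => t ^ 2 * Real.cos (phi x t)).intervalIntegrable _ _)
      ((by unfold phi; fun_prop : Continuous fun t => x * Real.cos (phi x t)).intervalIntegrable _ _),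
    intervalIntegral.integral_const_mul] at h
  have h0 : phi x 0 = 0 := by simp [phi]
  rw [h0, Real.sin_zero] at h
  linarith

-- derivative of PP in x
lemma hasDerivAt_PP_x {x b : ℝ} (hb : b ^ 2 + x ≠ 0) :
    HasDerivAt (fun y => PP y b) (P1 x b) x := by
  have hnum := hasDerivAt_sin_phi_x b x
  have hden : HasDerivAt (fun y : ℝ => b ^ 2 + y) 1 x := by
    simpa using (hasDerivAt_id x).const_add (b ^ 2)
  have := hnum.div hden hb
  refine this.congr_deriv ?_
  rw [P1]; field_simp

-- derivative of P1 in x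
lemma hasDerivAt_P1_x {x b : ℝ} (hb : b ^ 2 + x ≠ 0) :
    HasDerivAt (fun y => P1 y b) (P2 x b) x := by
  have hden : HasDerivAt (fun y : ℝ => b ^ 2 + y) 1 x := by
    simpa using (hasDerivAt_id x).const_add (b ^ 2)
  have hden2 : HasDerivAt (fun y : ℝ => (b ^ 2 + y) ^ 2) (2 * (b ^ 2 + x)) x := by
    have := (hasDerivAt_pow 2 (b ^ 2 + x)).comp x hden
    refine this.congr_deriv ?_; ring
  have h1 : HasDerivAt (fun y => b * Real.cos (phi y b) / (b ^ 2 + y))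
      ((b * -(b * Real.sin (phi x b)) * (b ^ 2 + x) - b * Real.cos (phi x b) * 1)
        / (b ^ 2 + x) ^ 2) x :=
    (((hasDerivAt_cos_phi_x b x).const_mul b)).div hden hb
  have h2 : HasDerivAt (fun y => Real.sin (phi y b) / (b ^ 2 + y) ^ 2)
      ((b * Real.cos (phi x b) * (b ^ 2 + x) ^ 2 - Real.sin (phi x b) * (2 * (b ^ 2 + x)))
        / ((b ^ 2 + x) ^ 2) ^ 2) x :=
    (hasDerivAt_sin_phi_x b x).div hden2 (pow_ne_zero 2 hb)
  have := h1.sub h2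
  refine this.congr_deriv ?_
  rw [P2]; field_simp; ring

-- algebraic identity : E = x·PP - sin - P2
lemma EE_eq {x b : ℝ} (hb : b ^ 2 + x ≠ 0) :
    EE x b = x * PP x b - Real.sin (phi x b) - P2 x b := by
  rw [EE, PP, P2]; field_simp; ring

section bounds
variable {a x K t : ℝ} (h0a : 0 ≤ a) (hax : 1 ≤ a ^ 2 + x) (hxK : |x| ≤ K) (hat : a + 1 ≤ t)

include h0a hax hxK hat

lemma basic_D : 1 ≤ t ^ 2 + x ∧ (t - a) ^ 2 ≤ t ^ 2 + x ∧ 1 ≤ t - a ∧ 0 ≤ K := by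
  have h1 : 1 ≤ t - a := by linarith
  have h2 : a ≤ t := by linarith
  refine ⟨by nlinarith, by nlinarith, h1, le_trans (abs_nonneg x) hxK⟩

lemma GG_bound2 : |GG x t| ≤ (2 + K) * ((t - a) ^ 2)⁻¹ := by
  obtain ⟨hD1, hD2, hta, hK0⟩ := basic_D h0a hax hxK hat
  have hxK' := abs_le.1 hxK
  have ht0 : (0:ℝ) ≤ t := by linarith
  have hDpos : (0:ℝ) < t ^ 2 + x := by linarith
  have h2t : 2 * t ≤ (2 + K) * (t ^ 2 + x) := by
    nlinarith [sq_nonneg (t - 1), mul_nonneg (sub_nonneg.2 hD1) (by linarith : (0:ℝ) ≤ 1 + K)]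
  have habs : |GG x t| ≤ 2 * t / (t ^ 2 + x) ^ 2 := by
    rw [GG, abs_div, abs_of_pos (by positivity : (0:ℝ) < (t ^ 2 + x) ^ 2)]
    apply div_le_div_of_nonneg_right ?_ (by positivity)
    rw [abs_mul, abs_of_nonneg (by positivity : (0:ℝ) ≤ 2 * t)]
    nlinarith [Real.abs_sin_le_one (phi x t), abs_nonneg (Real.sin (phi x t))]
  refine habs.trans ?_
  rw [inv_eq_one_div, mul_one_div, div_le_div_iff₀ (by positivity) (by positivity)]
  have k1 : 2 * t * (t - a) ^ 2 ≤ ((2 + K) * (t ^ 2 + x)) * (t - a) ^ 2 :=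
    mul_le_mul_of_nonneg_right h2t (by positivity)
  have k2 : ((2 + K) * (t ^ 2 + x)) * (t - a) ^ 2 ≤ ((2 + K) * (t ^ 2 + x)) * (t ^ 2 + x) :=
    mul_le_mul_of_nonneg_left hD2 (by positivity)
  nlinarith [k1, k2]

lemma GGx_bound2 : |GGx x t| ≤ (6 + 4 * K) * ((t - a) ^ 2)⁻¹ := by
  obtain ⟨hD1, hD2, hta, hK0⟩ := basic_D h0a hax hxK hat
  have hxK' := abs_le.1 hxK
  have ht0 : (0:ℝ) ≤ t := by linarith
  have hDpos : (0:ℝ) < t ^ 2 + x := by linarith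
  have ht2 : 2 * t ^ 2 ≤ (2 + 2 * K) * (t ^ 2 + x) := by
    nlinarith [mul_nonneg (sub_nonneg.2 hD1) hK0]
  have h4t : 4 * t ≤ (4 + 2 * K) * (t ^ 2 + x) := by
    nlinarith [sq_nonneg (t - 1), mul_nonneg (sub_nonneg.2 hD1) (by linarith : (0:ℝ) ≤ 2 + K)]
  have h1 : |2 * t ^ 2 * Real.cos (phi x t) / (t ^ 2 + x) ^ 2| ≤ (2 + 2 * K) / (t ^ 2 + x) := by
    rw [abs_div, abs_of_pos (by positivity : (0:ℝ) < (t ^ 2 + x) ^ 2),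
      div_le_div_iff₀ (by positivity) hDpos]
    have : |2 * t ^ 2 * Real.cos (phi x t)| ≤ 2 * t ^ 2 := by
      rw [abs_mul, abs_of_nonneg (by positivity : (0:ℝ) ≤ 2 * t ^ 2)]
      nlinarith [Real.abs_cos_le_one (phi x t), abs_nonneg (Real.cos (phi x t)), sq_nonneg t]
    calc |2 * t ^ 2 * Real.cos (phi x t)| * (t ^ 2 + x) ≤ (2 * t ^ 2) * (t ^ 2 + x) :=
          mul_le_mul_of_nonneg_right this (le_of_lt hDpos)
      _ ≤ ((2 + 2 * K) * (t ^ 2 + x)) * (t ^ 2 + x) := mul_le_mul_of_nonneg_right ht2 (le_of_lt hDpos)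
      _ = (2 + 2 * K) * (t ^ 2 + x) ^ 2 := by ring
  have h2 : |4 * t * Real.sin (phi x t) / (t ^ 2 + x) ^ 3| ≤ (4 + 2 * K) / (t ^ 2 + x) := by
    rw [abs_div, abs_of_pos (by positivity : (0:ℝ) < (t ^ 2 + x) ^ 3),
      div_le_div_iff₀ (by positivity) hDpos]
    have : |4 * t * Real.sin (phi x t)| ≤ 4 * t := by
      rw [abs_mul, abs_of_nonneg (by positivity : (0:ℝ) ≤ 4 * t)]
      nlinarith [Real.abs_sin_le_one (phi x t), abs_nonneg (Real.sin (phi x t))]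
    calc |4 * t * Real.sin (phi x t)| * (t ^ 2 + x) ≤ (4 * t) * (t ^ 2 + x) :=
          mul_le_mul_of_nonneg_right this (le_of_lt hDpos)
      _ ≤ ((4 + 2 * K) * (t ^ 2 + x)) * (t ^ 2 + x) := mul_le_mul_of_nonneg_right h4t (le_of_lt hDpos)
      _ = ((4 + 2 * K) * (t ^ 2 + x)) * (t ^ 2 + x) := rfl
      _ ≤ (4 + 2 * K) * (t ^ 2 + x) ^ 3 := by nlinarith [sq_nonneg (t^2+x-1), mul_nonneg (by linarith : (0:ℝ) ≤ 4 + 2*K) (sq_nonneg (t^2+x))]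
  have hsum : |GGx x t| ≤ (6 + 4 * K) / (t ^ 2 + x) := by
    rw [GGx]
    calc |2 * t ^ 2 * Real.cos (phi x t) / (t ^ 2 + x) ^ 2 -
          4 * t * Real.sin (phi x t) / (t ^ 2 + x) ^ 3|
        ≤ |2 * t ^ 2 * Real.cos (phi x t) / (t ^ 2 + x) ^ 2| +
          |4 * t * Real.sin (phi x t) / (t ^ 2 + x) ^ 3| := abs_sub _ _
      _ ≤ (2 + 2 * K) / (t ^ 2 + x) + (4 + 2 * K) / (t ^ 2 + x) := add_le_add h1 h2
      _ = (6 + 4 * K) / (t ^ 2 + x) := by ring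
  refine hsum.trans ?_
  rw [inv_eq_one_div, mul_one_div]
  apply div_le_div_of_nonneg_left (by linarith) (by positivity) hD2
end bounds

lemma EE_bound {a x K b : ℝ} (h0a : 0 ≤ a) (hax : 1 ≤ a ^ 2 + x) (hxK : |x| ≤ K)
    (hab : a + 1 ≤ b) : |EE x b| ≤ (4 + K) * ((b - a) ^ 2)⁻¹ := by
  obtain ⟨hD1, hD2, hta, hK0⟩ := basic_D h0a hax hxK hab
  have hxK' := abs_le.1 hxK
  have ht0 : (0:ℝ) ≤ b := by linarith
  have hDpos : (0:ℝ) < b ^ 2 + x := by linarith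
  have h2b : 2 * b ≤ (2 + K) * (b ^ 2 + x) := by
    nlinarith [sq_nonneg (b - 1), mul_nonneg (sub_nonneg.2 hD1) (by linarith : (0:ℝ) ≤ 1 + K)]
  have h1 : |2 * b * Real.cos (phi x b) / (b ^ 2 + x) ^ 2| ≤ (2 + K) / (b ^ 2 + x) := by
    rw [abs_div, abs_of_pos (by positivity : (0:ℝ) < (b ^ 2 + x) ^ 2),
      div_le_div_iff₀ (by positivity) hDpos]
    have : |2 * b * Real.cos (phi x b)| ≤ 2 * b := by
      rw [abs_mul, abs_of_nonneg (by positivity : (0:ℝ) ≤ 2 * b)]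
      nlinarith [Real.abs_cos_le_one (phi x b), abs_nonneg (Real.cos (phi x b))]
    calc |2 * b * Real.cos (phi x b)| * (b ^ 2 + x) ≤ (2 * b) * (b ^ 2 + x) :=
          mul_le_mul_of_nonneg_right this (le_of_lt hDpos)
      _ ≤ ((2 + K) * (b ^ 2 + x)) * (b ^ 2 + x) := mul_le_mul_of_nonneg_right h2b (le_of_lt hDpos)
      _ = (2 + K) * (b ^ 2 + x) ^ 2 := by ring
  have h2 : |2 * Real.sin (phi x b) / (b ^ 2 + x) ^ 3| ≤ 2 / (b ^ 2 + x) := by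
    rw [abs_div, abs_of_pos (by positivity : (0:ℝ) < (b ^ 2 + x) ^ 3),
      div_le_div_iff₀ (by positivity) hDpos]
    have hs : |2 * Real.sin (phi x b)| ≤ 2 := by
      rw [abs_mul, abs_two]
      nlinarith [Real.abs_sin_le_one (phi x b), abs_nonneg (Real.sin (phi x b))]
    calc |2 * Real.sin (phi x b)| * (b ^ 2 + x) ≤ 2 * (b ^ 2 + x) :=
          mul_le_mul_of_nonneg_right hs (le_of_lt hDpos)
      _ ≤ 2 * (b ^ 2 + x) ^ 3 := by nlinarith [sq_nonneg (b^2+x-1), sq_nonneg (b^2+x)]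
  have hsum : |EE x b| ≤ (4 + K) / (b ^ 2 + x) := by
    rw [EE]
    calc |2 * b * Real.cos (phi x b) / (b ^ 2 + x) ^ 2 - 2 * Real.sin (phi x b) / (b ^ 2 + x) ^ 3|
        ≤ |2 * b * Real.cos (phi x b) / (b ^ 2 + x) ^ 2| +
          |2 * Real.sin (phi x b) / (b ^ 2 + x) ^ 3| := abs_sub _ _
      _ ≤ (2 + K) / (b ^ 2 + x) + 2 / (b ^ 2 + x) := add_le_add h1 h2
      _ = (4 + K) / (b ^ 2 + x) := by ring
  refine hsum.trans ?_
  rw [inv_eq_one_div, mul_one_div]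
  apply div_le_div_of_nonneg_left (by linarith) (by positivity) hD2

lemma hasDerivAt_neg_inv_shift (a t : ℝ) (ht : t ≠ a) :
    HasDerivAt (fun s => -(s - a)⁻¹) (((t - a) ^ 2)⁻¹) t := by
  have h1 : HasDerivAt (fun s : ℝ => s - a) 1 t := (hasDerivAt_id t).sub_const a
  have := (h1.inv (sub_ne_zero.2 ht)).neg
  refine this.congr_deriv ?_
  field_simp

lemma continuousOn_inv_sq_shift {a c : ℝ} (hc : a < c) :
    ContinuousOn (fun t => ((t - a) ^ 2)⁻¹) (Ici c) := by
  apply ContinuousOn.inv₀ (by fun_prop)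
  intro t ht
  have h' : a < t := lt_of_lt_of_le hc ht
  exact pow_ne_zero 2 (sub_ne_zero.2 (ne_of_gt h'))

lemma integral_inv_sq_shift {a c d : ℝ} (hc : a < c) (hcd : c ≤ d) :
    ∫ t in c..d, ((t - a) ^ 2)⁻¹ = (c - a)⁻¹ - (d - a)⁻¹ := by
  have hder : ∀ t ∈ uIcc c d, HasDerivAt (fun s => -(s - a)⁻¹) (((t - a) ^ 2)⁻¹) t := by
    intro t ht
    rw [uIcc_of_le hcd] at ht
    exact hasDerivAt_neg_inv_shift a t (by rcases ht with ⟨h1, _⟩; intro h; rw [h] at h1; linarith)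
  have hint : IntervalIntegrable (fun t => ((t - a) ^ 2)⁻¹) volume c d := by
    apply ContinuousOn.intervalIntegrable
    apply (continuousOn_inv_sq_shift hc).mono
    rw [uIcc_of_le hcd]; exact Icc_subset_Ici_self
  rw [intervalIntegral.integral_eq_sub_of_hasDerivAt hder hint]
  ring

lemma tendsto_neg_inv_shift (a : ℝ) :
    Tendsto (fun s : ℝ => -(s - a)⁻¹) atTop (𝓝 0) := by
  have : Tendsto (fun s : ℝ => s - a) atTop atTop :=
    tendsto_atTop_add_const_right _ (-a) tendsto_id
  simpa using this.inv_tendsto_atTop.neg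

lemma hasDerivAt_neg_inv_shift' {a c : ℝ} (hc : a < c) :
    ∀ t ∈ Ici c, HasDerivAt (fun s => -(s - a)⁻¹) (((t - a) ^ 2)⁻¹) t := fun t ht =>
  hasDerivAt_neg_inv_shift a t (by have : a < t := lt_of_lt_of_le hc ht; linarith)

lemma integrableOn_inv_sq_shift {a c : ℝ} (hc : a < c) :
    IntegrableOn (fun t => ((t - a) ^ 2)⁻¹) (Ioi c) := by
  apply integrableOn_Ioi_deriv_of_nonneg' (hasDerivAt_neg_inv_shift' hc) ?_ (tendsto_neg_inv_shift a)
  intro t ht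
  positivity

lemma integral_Ioi_inv_sq_shift {a c : ℝ} (hc : a < c) :
    ∫ t in Ioi c, ((t - a) ^ 2)⁻¹ = (c - a)⁻¹ := by
  rw [integral_Ioi_of_hasDerivAt_of_tendsto' (hasDerivAt_neg_inv_shift' hc)
    (integrableOn_inv_sq_shift hc) (tendsto_neg_inv_shift a)]
  simp

lemma abs_intervalIntegral_le {f : ℝ → ℝ} {a c d C : ℝ} (hc : a < c) (hcd : c ≤ d) (hC : 0 ≤ C)
    (hf : ∀ t ∈ Icc c d, |f t| ≤ C * ((t - a) ^ 2)⁻¹)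
    (hfi : IntervalIntegrable f volume c d) :
    |∫ t in c..d, f t| ≤ C * (c - a)⁻¹ := by
  have hgint : IntervalIntegrable (fun t => C * ((t - a) ^ 2)⁻¹) volume c d := by
    apply ContinuousOn.intervalIntegrable
    apply (((continuousOn_inv_sq_shift hc).const_smul C).mono ?_)
    rw [uIcc_of_le hcd]; exact Icc_subset_Ici_self
  have h := intervalIntegral.norm_integral_le_of_norm_le (f := f) (μ := volume)
    (a := c) (b := d) hcd ?_ hgint
  · refine h.trans ?_
    rw [intervalIntegral.integral_const_mul, integral_inv_sq_shift hc hcd]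
    have h1 : (0:ℝ) < c - a := by linarith
    have h2 : (0:ℝ) < d - a := by linarith
    have h3 : (d - a)⁻¹ ≤ (c - a)⁻¹ := by
      apply inv_anti₀ h1 (by linarith)
    have : (c - a)⁻¹ - (d - a)⁻¹ ≤ (c - a)⁻¹ := by
      have : (0:ℝ) ≤ (d - a)⁻¹ := by positivity
      linarith
    exact mul_le_mul_of_nonneg_left this hC
  · filter_upwards with t ht
    exact hf t ⟨le_of_lt ht.1, ht.2⟩

lemma abs_integral_Ioi_le {f : ℝ → ℝ} {a c C : ℝ} (hc : a < c) (hC : 0 ≤ C)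
    (hf : ∀ t ∈ Ioi c, |f t| ≤ C * ((t - a) ^ 2)⁻¹)
    (hfi : IntegrableOn f (Ioi c)) :
    |∫ t in Ioi c, f t| ≤ C * (c - a)⁻¹ := by
  have hgint : IntegrableOn (fun t => C * ((t - a) ^ 2)⁻¹) (Ioi c) :=
    (integrableOn_inv_sq_shift hc).const_mul C
  have h : ‖∫ t in Ioi c, f t‖ ≤ ∫ t in Ioi c, C * ((t - a) ^ 2)⁻¹ := by
    apply MeasureTheory.norm_integral_le_of_norm_le hgint
    filter_upwards [ae_restrict_mem measurableSet_Ioi] with t ht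
    exact hf t ht
  rw [Real.norm_eq_abs] at h
  refine h.trans ?_
  rw [MeasureTheory.integral_const_mul, integral_Ioi_inv_sq_shift hc]

---- new material


lemma continuousOn_GGx (y c : ℝ) (h0c : 0 ≤ c) (hcy : 1 ≤ c ^ 2 + y) :
    ContinuousOn (GGx y) (Ici c) := by
  have hne : ∀ t ∈ Ici c, (t ^ 2 + y) ≠ 0 := by
    intro t ht
    have : 1 ≤ t ^ 2 + y := by have h := ht.out; nlinarith
    linarith
  apply ContinuousOn.sub
  · exact ContinuousOn.div (Continuous.continuousOn (by unfold phi; fun_prop))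
      (Continuous.continuousOn (by fun_prop)) (fun t ht => pow_ne_zero 2 (hne t ht))
  · exact ContinuousOn.div (Continuous.continuousOn (by unfold phi; fun_prop))
      (Continuous.continuousOn (by fun_prop)) (fun t ht => pow_ne_zero 3 (hne t ht))

lemma hasDerivAt_GG_x (t y : ℝ) (h : t ^ 2 + y ≠ 0) :
    HasDerivAt (fun z => GG z t) (GGx y t) y := by
  have hnum : HasDerivAt (fun z => 2 * t * Real.sin (phi z t))
      (2 * t * (t * Real.cos (phi y t))) y := (hasDerivAt_sin_phi_x t y).const_mul (2 * t)
  have hden0 : HasDerivAt (fun z : ℝ => t ^ 2 + z) 1 y := by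
    simpa using (hasDerivAt_id y).const_add (t ^ 2)
  have hden : HasDerivAt (fun z : ℝ => (t ^ 2 + z) ^ 2) (2 * (t ^ 2 + y)) y := by
    have := (hasDerivAt_pow 2 (t ^ 2 + y)).comp y hden0
    refine this.congr_deriv ?_; ring
  have := hnum.div hden (pow_ne_zero 2 h)
  refine this.congr_deriv ?_
  rw [GGx]; field_simp; ring

lemma hasDerivAt_intGG {x a c d K : ℝ} (h0a : 0 ≤ a) (hc : a + 1 ≤ c) (hcd : c ≤ d)
    (hball : ∀ y ∈ ball x 1, 1 ≤ a ^ 2 + y ∧ |y| ≤ K) :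
    HasDerivAt (fun y => ∫ t in c..d, GG y t) (∫ t in c..d, GGx x t) x := by
  have hxb : x ∈ ball x 1 := mem_ball_self one_pos
  have hK0 : 0 ≤ K := le_trans (abs_nonneg x) (hball x hxb).2
  have hsub : Set.uIoc c d ⊆ Ici c := by
    rw [uIoc_of_le hcd]; exact fun t ht => le_of_lt ht.1
  have hsub' : uIcc c d ⊆ Ici c := by
    rw [uIcc_of_le hcd]; exact Icc_subset_Ici_self
  have hc2 : ∀ y, 1 ≤ a ^ 2 + y → 1 ≤ c ^ 2 + y := by
    intro y h; nlinarith
  have h0c : (0:ℝ) ≤ c := by linarith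
  exact (intervalIntegral.hasDerivAt_integral_of_dominated_loc_of_deriv_le
    (F := fun y t => GG y t) (F' := fun y t => GGx y t)
    (a := c) (b := d) (μ := volume) (x₀ := x)
    (bound := fun t => (6 + 4 * K) * ((t - a) ^ 2)⁻¹) (s := ball x 1) (ball_mem_nhds x one_pos)
    (by
      filter_upwards [ball_mem_nhds x one_pos] with y hy
      exact ((continuousOn_G y c h0c (hc2 y (hball y hy).1)).mono hsub).aestronglyMeasurable
        measurableSet_uIoc)
    (((continuousOn_G x c h0c (hc2 x (hball x hxb).1)).mono hsub').intervalIntegrable)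
    (((continuousOn_GGx x c h0c (hc2 x (hball x hxb).1)).mono hsub).aestronglyMeasurable
      measurableSet_uIoc)
    (Eventually.of_forall fun t ht y hy => by
      rw [Real.norm_eq_abs]
      refine GGx_bound2 h0a (hball y hy).1 (hball y hy).2 ?_
      have := hsub ht; have h' := this.out; linarith)
    ((((continuousOn_inv_sq_shift (by linarith : a < c)).const_smul
        ((6:ℝ) + 4 * K)).mono hsub').intervalIntegrable)
    (Eventually.of_forall fun t ht y hy => by
      refine hasDerivAt_GG_x t y ?_
      have h' := (hsub ht).out
      have h1 := (hball y hy).1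
      nlinarith)).2

lemma hasDerivAt_HH {a x : ℝ} (n : ℕ) (hD : 1 ≤ (a + n) ^ 2 + x) :
    HasDerivAt (HH a n) (HH' a n x) x := by
  have h := (hasDerivAt_F (a + n) x).sub (hasDerivAt_PP_x (b := a + n) (by linarith))
  exact h

lemma hasDerivAt_HH' {a x : ℝ} (n : ℕ) (hD : 1 ≤ (a + n) ^ 2 + x) :
    HasDerivAt (HH' a n) (HH2 a n x) x := by
  have h := ((hasDerivAt_F2 (a + n) x).neg).sub (hasDerivAt_P1_x (b := a + n) (by linarith))
  refine h.congr_deriv ?_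
  rw [HH2, HH, EE_eq (b := a + n) (by linarith), ftc_t2cos]
  ring

lemma HH_rep {a x : ℝ} (n : ℕ) (h0a : 0 ≤ a) (hD : 1 ≤ (a + n) ^ 2 + x) :
    Real.pi * Ai x = HH a n x + ∫ t in Ioi (a + (n:ℝ)), GG x t := by
  have h := pi_mul_Ai (a := a + n) (by positivity) hD
  rw [HH]; linarith

lemma airy_local (x₀ : ℝ) : ∃ g1 : ℝ → ℝ,
    (∀ x ∈ ball x₀ 1, HasDerivAt (fun y => Real.pi * Ai y) (g1 x) x) ∧
    (∀ x ∈ ball x₀ 1, HasDerivAt g1 (x * (Real.pi * Ai x)) x) := by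
  set a := Real.sqrt (max 0 (3 - x₀)) with ha_def
  set K := |x₀| + 2 with hK_def
  have h0a : 0 ≤ a := Real.sqrt_nonneg _
  have hK0 : (0:ℝ) ≤ K := by positivity
  have hcond : ∀ y ∈ ball x₀ 2, 1 ≤ a ^ 2 + y ∧ |y| ≤ K := by
    intro y hy
    rw [mem_ball, Real.dist_eq] at hy
    have h1 := abs_lt.1 hy
    constructor
    · rw [ha_def, Real.sq_sqrt (le_max_left _ _)]
      rcases le_total (3 - x₀) 0 with h | h
      · rw [max_eq_left h]; linarith
      · rw [max_eq_right h]; linarith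
    · rw [hK_def, abs_le]
      constructor
      · have := neg_abs_le x₀; linarith
      · have := le_abs_self x₀; linarith
  have hSsub : ball x₀ 1 ⊆ ball x₀ 2 := ball_subset_ball (by norm_num)
  have hb2 : ∀ (n : ℕ) (y : ℝ), 1 ≤ a ^ 2 + y → 1 ≤ (a + n) ^ 2 + y := by
    intro n y h
    have hn : (0:ℝ) ≤ n := n.cast_nonneg
    nlinarith [mul_nonneg h0a hn, sq_nonneg (n:ℝ)]
  have hder1 : ∀ (n : ℕ), ∀ y ∈ ball x₀ 2, HasDerivAt (HH a n) (HH' a n y) y :=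
    fun n y hy => hasDerivAt_HH n (hb2 n y (hcond y hy).1)
  have hder2 : ∀ (n : ℕ), ∀ y ∈ ball x₀ 2, HasDerivAt (HH' a n) (HH2 a n y) y :=
    fun n y hy => hasDerivAt_HH' n (hb2 n y (hcond y hy).1)
  have hrep : ∀ (n : ℕ), ∀ y ∈ ball x₀ 2,
      Real.pi * Ai y = HH a n y + ∫ t in Ioi (a + (n:ℝ)), GG y t :=
    fun n y hy => HH_rep n h0a (hb2 n y (hcond y hy).1)
  -- tail bound for the remainder integral
  have htail : ∀ (n : ℕ), 1 ≤ n → ∀ y ∈ ball x₀ 2,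
      |∫ t in Ioi (a + (n:ℝ)), GG y t| ≤ (2 + K) / n := by
    intro n hn y hy
    have hn1 : (1:ℝ) ≤ n := by exact_mod_cast hn
    have h := abs_integral_Ioi_le (f := GG y) (a := a) (c := a + n) (C := 2 + K)
      (by linarith) (by linarith)
      (fun t ht => GG_bound2 h0a (hcond y hy).1 (hcond y hy).2 (by have := ht.out; linarith))
      (G_integrableOn (by positivity) (hb2 n y (hcond y hy).1))
    calc |∫ t in Ioi (a + (n:ℝ)), GG y t| ≤ (2 + K) * (a + n - a)⁻¹ := h
      _ = (2 + K) / n := by rw [add_sub_cancel_left]; rw [div_eq_mul_inv]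
  -- uniform Cauchy for HH'
  have hdiffbound : ∀ (m n : ℕ), 1 ≤ n → n ≤ m → ∀ x ∈ ball x₀ 1,
      |HH' a m x - HH' a n x| ≤ (6 + 4 * K) / n := by
    intro m n hn hnm x hx
    have hn1 : (1:ℝ) ≤ n := by exact_mod_cast hn
    have hnm1 : (n:ℝ) ≤ m := by exact_mod_cast hnm
    have hx2 : x ∈ ball x₀ 2 := hSsub hx
    have hballx : ∀ y ∈ ball x 1, 1 ≤ a ^ 2 + y ∧ |y| ≤ K := by
      intro y hy
      apply hcond
      exact ball_subset_ball' (by have := mem_ball.1 hx; linarith) hy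
    have heqd : HH' a m x - HH' a n x = ∫ t in (a + (n:ℝ))..(a + m), GGx x t := by
      have hfun : (fun y => HH a m y - HH a n y)
          =ᶠ[𝓝 x] (fun y => ∫ t in (a + (n:ℝ))..(a + m), GG y t) := by
        filter_upwards [isOpen_ball.mem_nhds hx2] with y hy
        have h1 : 1 ≤ (a + (n:ℝ)) ^ 2 + y := hb2 n y (hcond y hy).1
        have hadd := intervalIntegral.integral_add_adjacent_intervals
          (a := (0:ℝ)) (b := a + n) (c := a + m) (f := fun t => Real.cos (phi y t)) (μ := volume)
          ((continuous_cos_phi y).intervalIntegrable _ _)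
          ((continuous_cos_phi y).intervalIntegrable _ _)
        have hibp := ibp1 (x := y) (a := a + (n:ℝ)) (b := a + m) (by positivity) h1
          (by linarith)
        rw [HH, HH, ← hadd, hibp]; ring
      have hd1 : HasDerivAt (fun y => HH a m y - HH a n y) (HH' a m x - HH' a n x) x :=
        (hder1 m x hx2).sub (hder1 n x hx2)
      have hd2 : HasDerivAt (fun y => ∫ t in (a + (n:ℝ))..(a + m), GG y t)
          (∫ t in (a + (n:ℝ))..(a + m), GGx x t) x :=
        hasDerivAt_intGG h0a (by linarith) (by linarith) hballx
      exact hd1.unique (hd2.congr_of_eventuallyEq hfun)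
    rw [heqd]
    have h := abs_intervalIntegral_le (f := GGx x) (a := a) (c := a + n) (d := a + m)
      (C := 6 + 4 * K) (by linarith) (by linarith) (by linarith)
      (fun t ht => GGx_bound2 h0a (hcond x hx2).1 (hcond x hx2).2 (by have := ht.1; linarith))
      (((continuousOn_GGx x (a + n) (by positivity)
          (hb2 n x (hcond x hx2).1)).mono
        (by rw [uIcc_of_le (by linarith : a + (n:ℝ) ≤ a + m)]; exact Icc_subset_Ici_self)).intervalIntegrable)
    calc |∫ t in (a + (n:ℝ))..(a + m), GGx x t| ≤ (6 + 4 * K) * (a + n - a)⁻¹ := h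
      _ = (6 + 4 * K) / n := by rw [add_sub_cancel_left]; rw [div_eq_mul_inv]
  have hucH' : UniformCauchySeqOn (HH' a) atTop (ball x₀ 1) := by
    rw [Metric.uniformCauchySeqOn_iff]
    intro ε hε
    obtain ⟨N, hN⟩ := exists_nat_gt ((6 + 4 * K) / ε)
    refine ⟨N + 1, fun m hm n hn x hx => ?_⟩
    have hkey : ∀ (p q : ℕ), N + 1 ≤ q → q ≤ p → |HH' a p x - HH' a q x| < ε := by
      intro p q hq hpq
      have h1 : 1 ≤ q := le_trans (Nat.le_add_left 1 N) hq
      have := hdiffbound p q h1 hpq x hx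
      have hq1 : (N:ℝ) + 1 ≤ q := by exact_mod_cast hq
      have hNpos : (0:ℝ) < N + 1 := by positivity
      have h2 : (6 + 4 * K) / (q:ℝ) ≤ (6 + 4 * K) / ((N:ℝ) + 1) :=
        div_le_div_of_nonneg_left (by linarith) hNpos hq1 |>.trans_eq rfl
      have h3 : (6 + 4 * K) / ((N:ℝ) + 1) < ε := by
        rw [div_lt_iff₀ hNpos]
        have : (6 + 4 * K) / ε < (N:ℝ) := hN
        rw [div_lt_iff₀ hε] at this
        nlinarith
      linarith
    rcases le_total n m with h | h
    · rw [dist_eq_norm, Real.norm_eq_abs]; exact hkey m n hn h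
    · rw [dist_comm, dist_eq_norm, Real.norm_eq_abs]; exact hkey n m hm h
  set g1 : ℝ → ℝ := fun x => limUnder atTop (fun n => HH' a n x) with hg1_def
  have hptH' : ∀ x ∈ ball x₀ 1, Tendsto (fun n => HH' a n x) atTop (𝓝 (g1 x)) :=
    fun x hx => (hucH'.cauchySeq hx).tendsto_limUnder
  have htuH' : TendstoUniformlyOn (HH' a) g1 atTop (ball x₀ 1) :=
    hucH'.tendstoUniformlyOn_of_tendsto hptH'
  have hptH : ∀ x ∈ ball x₀ 1, Tendsto (fun n => HH a n x) atTop (𝓝 (Real.pi * Ai x)) := by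
    intro x hx
    have hx2 := hSsub hx
    have hzero : Tendsto (fun n : ℕ => Real.pi * Ai x - HH a n x) atTop (𝓝 0) := by
      apply squeeze_zero_norm' ?_ (tendsto_const_div_atTop_nhds_zero_nat (2 + K))
      filter_upwards [eventually_ge_atTop 1] with n hn
      rw [Real.norm_eq_abs, hrep n x hx2]
      simpa using htail n hn x hx2
    have := tendsto_const_nhds (x := Real.pi * Ai x) (f := atTop (α := ℕ)) |>.sub hzero
    simpa using this
  have htuH2 : TendstoUniformlyOn (fun n x => HH2 a n x) (fun x => x * (Real.pi * Ai x))
      atTop (ball x₀ 1) := by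
    rw [Metric.tendstoUniformlyOn_iff]
    intro ε hε
    obtain ⟨N, hN⟩ := exists_nat_gt ((K * (2 + K) + (4 + K)) / ε)
    filter_upwards [eventually_ge_atTop (N + 1)] with n hn x hx
    have hx2 := hSsub hx
    have h1 : 1 ≤ n := le_trans (Nat.le_add_left 1 N) hn
    have hn1 : (1:ℝ) ≤ n := by exact_mod_cast h1
    have hEE : |EE x (a + n)| ≤ (4 + K) / n := by
      have h := EE_bound h0a (hcond x hx2).1 (hcond x hx2).2 (b := a + n) (by linarith)
      rw [add_sub_cancel_left] at h
      refine h.trans ?_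
      rw [div_eq_mul_inv]
      apply mul_le_mul_of_nonneg_left ?_ (by linarith)
      rw [inv_le_inv₀ (by positivity) (by positivity)]
      nlinarith
    have hxK : |x| ≤ K := (hcond x hx2).2
    have hrn := htail n h1 x hx2
    rw [dist_eq_norm, Real.norm_eq_abs]
    have hsplit : x * (Real.pi * Ai x) - HH2 a n x
        = x * (∫ t in Ioi (a + (n:ℝ)), GG x t) - EE x (a + n) := by
      rw [HH2, hrep n x hx2]; ring
    rw [hsplit]
    have : |x * (∫ t in Ioi (a + (n:ℝ)), GG x t) - EE x (a + n)|
        ≤ K * ((2 + K) / n) + (4 + K) / n := by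
      calc |x * (∫ t in Ioi (a + (n:ℝ)), GG x t) - EE x (a + n)|
          ≤ |x * (∫ t in Ioi (a + (n:ℝ)), GG x t)| + |EE x (a + n)| := abs_sub _ _
        _ ≤ K * ((2 + K) / n) + (4 + K) / n := by
            apply add_le_add ?_ hEE
            rw [abs_mul]
            exact mul_le_mul hxK hrn (abs_nonneg _) hK0
    refine lt_of_le_of_lt this ?_
    have hNpos : (0:ℝ) < N + 1 := by positivity
    have hn1' : (N:ℝ) + 1 ≤ n := by exact_mod_cast hn
    have hC0 : (0:ℝ) ≤ K * (2 + K) + (4 + K) := by positivity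
    have hb : K * ((2 + K) / n) + (4 + K) / n = (K * (2 + K) + (4 + K)) / n := by ring
    rw [hb]
    have h2 : (K * (2 + K) + (4 + K)) / (n:ℝ) ≤ (K * (2 + K) + (4 + K)) / ((N:ℝ) + 1) :=
      div_le_div_of_nonneg_left hC0 hNpos hn1'
    have h3 : (K * (2 + K) + (4 + K)) / ((N:ℝ) + 1) < ε := by
      rw [div_lt_iff₀ hNpos]
      rw [div_lt_iff₀ hε] at hN
      nlinarith
    linarith
  refine ⟨g1, ?_, ?_⟩
  · intro x hx
    exact hasDerivAt_of_tendstoUniformlyOn isOpen_ball htuH'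
      (Eventually.of_forall fun n y hy => hder1 n y (hSsub hy)) hptH hx
  · intro x hx
    exact hasDerivAt_of_tendstoUniformlyOn isOpen_ball htuH2
      (Eventually.of_forall fun n y hy => hder2 n y (hSsub hy)) hptH' hx

lemma ai_differentiable (x : ℝ) : HasDerivAt Ai (deriv Ai x) x := by
  obtain ⟨g1, h1, _⟩ := airy_local x
  have hx : x ∈ ball x 1 := mem_ball_self one_pos
  have hAi : HasDerivAt Ai ((1 / Real.pi) * g1 x) x := by
    have h := (h1 x hx).const_mul (1 / Real.pi)
    have heq : (fun y => (1 / Real.pi) * (Real.pi * Ai y)) = Ai := by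
      funext y; field_simp
    rwa [heq] at h
  exact hAi.differentiableAt.hasDerivAt

lemma ai_deriv2 (x : ℝ) : HasDerivAt (deriv Ai) (x * Ai x) x := by
  obtain ⟨g1, h1, h2⟩ := airy_local x
  have hball : x ∈ ball x 1 := mem_ball_self one_pos
  have hAiD : ∀ y ∈ ball x 1, deriv Ai y = (1 / Real.pi) * g1 y := by
    intro y hy
    have h := (h1 y hy).const_mul (1 / Real.pi)
    have heq : (fun z => (1 / Real.pi) * (Real.pi * Ai z)) = Ai := by funext z; field_simp
    rw [heq] at h
    exact h.deriv
  have h2x := (h2 x hball).const_mul (1 / Real.pi)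
  have hval : (1 / Real.pi) * (x * (Real.pi * Ai x)) = x * Ai x := by field_simp
  rw [hval] at h2x
  apply h2x.congr_of_eventuallyEq
  filter_upwards [isOpen_ball.mem_nhds hball] with y hy
  exact hAiD y hy

lemma ai_cont : Continuous Ai :=
  continuous_iff_continuousAt.2 fun x => (ai_differentiable x).continuousAt

lemma ai_deriv_cont : Continuous (deriv Ai) :=
  continuous_iff_continuousAt.2 fun x => (ai_deriv2 x).continuousAt

lemma deriv_ai_bound {x : ℝ} (hx : 1 ≤ x) :
    |deriv Ai x| ≤ Real.sqrt ((deriv Ai 1) ^ 2 + 1) := by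
  set En : ℝ → ℝ := fun y => (deriv Ai y) ^ 2 - y * (Ai y) ^ 2 with hEn
  have hder : ∀ t ∈ uIcc (1:ℝ) x, HasDerivAt En (-(Ai t) ^ 2) t := by
    intro t _
    have h1 : HasDerivAt (fun y => (deriv Ai y) ^ 2) (2 * deriv Ai t * (t * Ai t)) t := by
      have := (ai_deriv2 t).pow 2
      refine this.congr_deriv ?_; ring
    have h2 : HasDerivAt (fun y => y * (Ai y) ^ 2)
        ((Ai t) ^ 2 + t * (2 * Ai t * deriv Ai t)) t := by
      have hsq : HasDerivAt (fun y => (Ai y) ^ 2) (2 * Ai t * deriv Ai t) t := by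
        have := (ai_differentiable t).pow 2
        refine this.congr_deriv ?_; ring
      have := (hasDerivAt_id t).mul hsq
      refine this.congr_deriv ?_; simp only [id_eq, one_mul]; try ring
    have := h1.sub h2
    refine this.congr_deriv ?_; ring
  have hint : IntervalIntegrable (fun t => -(Ai t) ^ 2) volume 1 x :=
    ((ai_cont.pow 2).neg).intervalIntegrable _ _
  have hftc := intervalIntegral.integral_eq_sub_of_hasDerivAt hder hint
  have hneg : ∫ t in (1:ℝ)..x, -(Ai t) ^ 2 ≤ 0 := by
    rw [intervalIntegral.integral_neg, neg_nonpos]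
    exact intervalIntegral.integral_nonneg hx (fun u _ => by positivity)
  have hEnx : En x ≤ En 1 := by rw [hftc] at hneg; linarith
  have hdecay := ai_decay hx
  have hx0 : (0:ℝ) < x := by linarith
  have hxAi : x * (Ai x) ^ 2 ≤ 1 := by
    have habs := abs_le.1 hdecay
    have h1 : (Ai x) ^ 2 ≤ (1 / x) ^ 2 := by nlinarith [habs.1, habs.2]
    calc x * (Ai x) ^ 2 ≤ x * (1 / x) ^ 2 := mul_le_mul_of_nonneg_left h1 (le_of_lt hx0)
      _ = 1 / x := by field_simp
      _ ≤ 1 := by rw [div_le_one hx0]; exact hx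
  have hsq : (deriv Ai x) ^ 2 ≤ (deriv Ai 1) ^ 2 + 1 := by
    have hEn1 : En 1 ≤ (deriv Ai 1) ^ 2 := by
      rw [hEn]; simp only [one_mul]; nlinarith [sq_nonneg (Ai 1)]
    have hx' : (deriv Ai x) ^ 2 = En x + x * (Ai x) ^ 2 := by rw [hEn]; ring
    linarith
  calc |deriv Ai x| = Real.sqrt ((deriv Ai x) ^ 2) := (Real.sqrt_sq_eq_abs _).symm
    _ ≤ Real.sqrt ((deriv Ai 1) ^ 2 + 1) := Real.sqrt_le_sqrt hsq

theorem airy_kernel_formula (u v : ℝ) (huv : u ≠ v) :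
    MeasureTheory.IntegrableOn (fun z : ℝ => Ai (u + z) * Ai (z + v)) (Set.Ioi 0) ∧
    ∫ z in Set.Ioi (0:ℝ), Ai (u + z) * Ai (z + v) =
      (Ai u * deriv Ai v - deriv Ai u * Ai v) / (u - v) := by
  set CA := Real.sqrt ((deriv Ai 1) ^ 2 + 1) with hCA_def
  have hCA0 : 0 ≤ CA := Real.sqrt_nonneg _
  set Z : ℝ := max (max (1 - u) (1 - v)) 1 with hZ_def
  have hZ1 : (1:ℝ) ≤ Z := le_max_right _ _
  have hZu : ∀ z : ℝ, Z ≤ z → 1 ≤ u + z := by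
    intro z hz
    have : 1 - u ≤ Z := le_trans (le_max_left _ _) (le_max_left _ _)
    linarith
  have hZv : ∀ z : ℝ, Z ≤ z → 1 ≤ v + z := by
    intro z hz
    have : 1 - v ≤ Z := le_trans (le_max_right _ _) (le_max_left _ _)
    linarith
  have hf_cont : Continuous (fun z : ℝ => Ai (u + z) * Ai (z + v)) := by
    apply Continuous.mul
    · exact ai_cont.comp (by fun_prop)
    · exact ai_cont.comp (by fun_prop)
  -- integrability
  have hint : MeasureTheory.IntegrableOn (fun z : ℝ => Ai (u + z) * Ai (z + v)) (Set.Ioi 0) := by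
    have part1 : IntegrableOn (fun z : ℝ => Ai (u + z) * Ai (z + v)) (Ioc 0 Z) :=
      hf_cont.integrableOn_Ioc
    have part2 : IntegrableOn (fun z : ℝ => Ai (u + z) * Ai (z + v)) (Ioi Z) := by
      have hmaj : IntegrableOn
          (fun z : ℝ => (1/2) * (((z - (-u)) ^ 2)⁻¹ + ((z - (-v)) ^ 2)⁻¹)) (Ioi Z) := by
        apply Integrable.const_mul
        apply Integrable.add
        · exact integrableOn_inv_sq_shift (by have := hZu Z le_rfl; linarith)
        · exact integrableOn_inv_sq_shift (by have := hZv Z le_rfl; linarith)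
      apply Integrable.mono' hmaj (hf_cont.aestronglyMeasurable.restrict)
      filter_upwards [ae_restrict_mem measurableSet_Ioi] with z hz
      have hz' : Z ≤ z := le_of_lt hz
      have hu1 : 1 ≤ u + z := hZu z hz'
      have hv1 : 1 ≤ v + z := hZv z hz'
      have hu0 : (0:ℝ) < u + z := by linarith
      have hv0 : (0:ℝ) < v + z := by linarith
      have d1 : |Ai (u + z)| ≤ 1 / (u + z) := ai_decay hu1
      have d2 : |Ai (z + v)| ≤ 1 / (v + z) := by rw [add_comm z v]; exact ai_decay hv1
      rw [Real.norm_eq_abs, abs_mul]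
      have hprod : |Ai (u + z)| * |Ai (z + v)| ≤ (1 / (u + z)) * (1 / (v + z)) :=
        mul_le_mul d1 d2 (abs_nonneg _) (by positivity)
      refine hprod.trans ?_
      have he1 : (z - -u) ^ 2 = (u + z) ^ 2 := by ring
      have he2 : (z - -v) ^ 2 = (v + z) ^ 2 := by ring
      rw [he1, he2]
      have key : 1/2 * (((u+z)^2)⁻¹ + ((v+z)^2)⁻¹) - (1/(u+z)) * (1/(v+z))
          = ((u+z) - (v+z))^2 / (2 * (u+z)^2 * (v+z)^2) := by
        field_simp
        ring
      nlinarith [key, sq_nonneg ((u+z) - (v+z)), mul_pos (mul_pos (by norm_num : (0:ℝ) < 2)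
        (pow_pos hu0 2)) (pow_pos hv0 2),
        div_nonneg (sq_nonneg ((u+z) - (v+z))) (le_of_lt (mul_pos (mul_pos
        (by norm_num : (0:ℝ) < 2) (pow_pos hu0 2)) (pow_pos hv0 2)))]
    have hsub : Ioi (0:ℝ) ⊆ Ioc 0 Z ∪ Ioi Z := by
      intro z hz
      rcases le_or_gt z Z with h | h
      · exact Or.inl ⟨hz, h⟩
      · exact Or.inr h
    exact (part1.union part2).mono_set hsub
  refine ⟨hint, ?_⟩
  -- Wronskian
  set W : ℝ → ℝ := fun z => Ai (u + z) * deriv Ai (v + z) - deriv Ai (u + z) * Ai (v + z)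
    with hW_def
  have hW : ∀ z : ℝ, HasDerivAt W ((v - u) * (Ai (u + z) * Ai (v + z))) z := by
    intro z
    have hzu : HasDerivAt (fun z : ℝ => u + z) 1 z := by
      simpa using (hasDerivAt_id z).const_add u
    have hzv : HasDerivAt (fun z : ℝ => v + z) 1 z := by
      simpa using (hasDerivAt_id z).const_add v
    have h1 : HasDerivAt (fun z : ℝ => Ai (u + z)) (deriv Ai (u + z)) z := by
      exact ((ai_differentiable (u + z)).comp z hzu).congr_deriv (mul_one _)
    have h4 : HasDerivAt (fun z : ℝ => Ai (v + z)) (deriv Ai (v + z)) z := by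
      exact ((ai_differentiable (v + z)).comp z hzv).congr_deriv (mul_one _)
    have h2 : HasDerivAt (fun z : ℝ => deriv Ai (v + z)) ((v + z) * Ai (v + z)) z := by
      exact ((ai_deriv2 (v + z)).comp z hzv).congr_deriv (mul_one _)
    have h3 : HasDerivAt (fun z : ℝ => deriv Ai (u + z)) ((u + z) * Ai (u + z)) z := by
      exact ((ai_deriv2 (u + z)).comp z hzu).congr_deriv (mul_one _)
    have := (h1.mul h2).sub (h3.mul h4)
    refine this.congr_deriv ?_
    ring
  have hWcont : Continuous W := by
    apply Continuous.sub
    · exact (ai_cont.comp (by fun_prop)).mul (ai_deriv_cont.comp (by fun_prop))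
    · exact (ai_deriv_cont.comp (by fun_prop)).mul (ai_cont.comp (by fun_prop))
  have hftc : ∀ R : ℝ, ∫ z in (0:ℝ)..R, Ai (u + z) * Ai (z + v) = (W R - W 0) / (v - u) := by
    intro R
    have hvu : v - u ≠ 0 := fun h => huv (by linarith [sub_eq_zero.1 h])
    have h := intervalIntegral.integral_eq_sub_of_hasDerivAt
      (a := (0:ℝ)) (b := R) (f := W) (f' := fun z => (v - u) * (Ai (u + z) * Ai (v + z)))
      (fun t _ => hW t)
      (Continuous.intervalIntegrable (by
        apply Continuous.mul continuous_const
        exact (ai_cont.comp (by fun_prop)).mul (ai_cont.comp (by fun_prop))) _ _)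
    rw [intervalIntegral.integral_const_mul] at h
    have hcomm : (fun z => Ai (u + z) * Ai (z + v)) = (fun z => Ai (u + z) * Ai (v + z)) := by
      funext z; rw [add_comm z v]
    rw [hcomm]
    field_simp at h ⊢
    linarith [h]
  have hWlim : Tendsto W atTop (𝓝 0) := by
    have hB : Tendsto (fun R : ℝ => CA * (u + R)⁻¹ + CA * (v + R)⁻¹) atTop (𝓝 0) := by
      have t1 : Tendsto (fun R : ℝ => (u + R)⁻¹) atTop (𝓝 0) :=
        (tendsto_atTop_add_const_left _ u tendsto_id).inv_tendsto_atTop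
      have t2 : Tendsto (fun R : ℝ => (v + R)⁻¹) atTop (𝓝 0) :=
        (tendsto_atTop_add_const_left _ v tendsto_id).inv_tendsto_atTop
      have := (t1.const_mul CA).add (t2.const_mul CA)
      simpa using this
    apply squeeze_zero_norm' ?_ hB
    · filter_upwards [eventually_ge_atTop Z] with R hR
      have hu1 := hZu R hR
      have hv1 := hZv R hR
      have hu0 : (0:ℝ) < u + R := by linarith
      have hv0 : (0:ℝ) < v + R := by linarith
      rw [Real.norm_eq_abs, hW_def]
      have hb1 : |Ai (u + R) * deriv Ai (v + R)| ≤ (u + R)⁻¹ * CA := by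
        rw [abs_mul]
        apply mul_le_mul ?_ (deriv_ai_bound hv1) (abs_nonneg _) (by positivity)
        rw [← one_div]; exact ai_decay hu1
      have hb2 : |deriv Ai (u + R) * Ai (v + R)| ≤ CA * (v + R)⁻¹ := by
        rw [abs_mul]
        apply mul_le_mul (deriv_ai_bound hu1) ?_ (abs_nonneg _) hCA0
        rw [← one_div]; exact ai_decay hv1
      calc |Ai (u + R) * deriv Ai (v + R) - deriv Ai (u + R) * Ai (v + R)|
          ≤ |Ai (u + R) * deriv Ai (v + R)| + |deriv Ai (u + R) * Ai (v + R)| := abs_sub _ _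
        _ ≤ (u + R)⁻¹ * CA + CA * (v + R)⁻¹ := add_le_add hb1 hb2
        _ = CA * (u + R)⁻¹ + CA * (v + R)⁻¹ := by ring
  have hIoi : Tendsto (fun R : ℝ => ∫ z in (0:ℝ)..R, Ai (u + z) * Ai (z + v)) atTop
      (𝓝 (∫ z in Ioi (0:ℝ), Ai (u + z) * Ai (z + v))) :=
    intervalIntegral_tendsto_integral_Ioi 0 hint tendsto_id
  have hIoi2 : Tendsto (fun R : ℝ => (W R - W 0) / (v - u)) atTop
      (𝓝 ((0 - W 0) / (v - u))) := ((hWlim.sub_const (W 0)).div_const (v - u))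
  have heq : ∫ z in Ioi (0:ℝ), Ai (u + z) * Ai (z + v) = (0 - W 0) / (v - u) := by
    have h' : Tendsto (fun R : ℝ => (W R - W 0) / (v - u)) atTop
        (𝓝 (∫ z in Ioi (0:ℝ), Ai (u + z) * Ai (z + v))) :=
      Tendsto.congr (fun R => hftc R) hIoi
    exact tendsto_nhds_unique h' hIoi2
  rw [heq]
  have hW0 : W 0 = Ai u * deriv Ai v - deriv Ai u * Ai v := by
    rw [hW_def]; norm_num
  rw [hW0]
  have hvu : v - u ≠ 0 := fun h => huv (by linarith [sub_eq_zero.1 h])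
  have huv' : u - v ≠ 0 := fun h => huv (by linarith [sub_eq_zero.1 h])
  field_simp
  ring

end
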